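/- In a finite probability space with random variables (U, X, W, Z, A, Y), A binary and Y taking values in a finite set 𝒴 ⊆ [0,∞), suppose: (i) Y^(a) ⟂ A | (X,U), positivity p(A=a | X,U) > 0, and consistency Y = Y^(a) on {A=a}; (ii) there is a nonnegative h with E[Y | A, X, U] = E[h(W,A,X) | A, X, U] a.s.; (iii) there is a nonnegative q with E[q(Z,A,X) | A, X, U] = p(U | 1−A, X)/p(U | A, X) a.s.; (iv) W ⟂ Z | (A, X, U). Then E[Y^(a) | A=1−a] = ∑_{w,z,x} h(w,a,x)·q(z,a,x)·p(w,z | A=a, x)·p(x | A=1−a). -/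

import Mathlib

open Finset Real
open scoped Classical

/-- Probability of an event under a pmf `P` on a finite sample space. -/
noncomputable def pr {Ω : Type*} [Fintype Ω] (P : Ω → ℝ) (E : Ω → Prop) : ℝ :=
  ∑ ω, if E ω then P ω else 0

/-- Expectation of `f` under `P`. -/
noncomputable def ex {Ω : Type*} [Fintype Ω] (P : Ω → ℝ) (f : Ω → ℝ) : ℝ :=
  ∑ ω, P ω * f ω

/-- Conditional expectation `E[f | E]`. -/
noncomputable def ce {Ω : Type*} [Fintype Ω] (P : Ω → ℝ) (f : Ω → ℝ) (E : Ω → Prop) : ℝ :=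
  (∑ ω, if E ω then P ω * f ω else 0) / pr P E

/-- Conditional probability `P(E | F)`. -/
noncomputable def cpr {Ω : Type*} [Fintype Ω] (P : Ω → ℝ) (E F : Ω → Prop) : ℝ :=
  pr P (fun ω => E ω ∧ F ω) / pr P F

namespace TwoProxyAux

variable {Ω : Type*} [Fintype Ω] (P : Ω → ℝ)

noncomputable def nm (f : Ω → ℝ) (E : Ω → Prop) : ℝ :=
  ∑ ω, if E ω then P ω * f ω else 0

lemma ce_eq (f : Ω → ℝ) (E : Ω → Prop) : ce P f E = nm P f E / pr P E := rfl

lemma pr_congr {E F : Ω → Prop} (h : ∀ ω, E ω ↔ F ω) : pr P E = pr P F := by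
  unfold pr; exact Finset.sum_congr rfl fun ω _ => by rw [h ω]

lemma nm_congr {f g : Ω → ℝ} {E F : Ω → Prop} (h : ∀ ω, E ω ↔ F ω)
    (hfg : ∀ ω, E ω → f ω = g ω) : nm P f E = nm P g F := by
  unfold nm; refine Finset.sum_congr rfl fun ω _ => ?_
  by_cases hE : E ω
  · rw [if_pos hE, if_pos ((h ω).mp hE), hfg ω hE]
  · rw [if_neg hE, if_neg (fun hF => hE ((h ω).mpr hF))]

lemma pr_mono (hP : ∀ ω, 0 ≤ P ω) {E F : Ω → Prop} (h : ∀ ω, E ω → F ω) :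
    pr P E ≤ pr P F := by
  unfold pr; apply Finset.sum_le_sum; intro ω _
  by_cases hE : E ω
  · rw [if_pos hE, if_pos (h ω hE)]
  · rw [if_neg hE]; split_ifs; exacts [hP ω, le_rfl]

lemma nm_partition {V : Type*} [Fintype V] (g : Ω → V) (f : Ω → ℝ) (E : Ω → Prop) :
    nm P f E = ∑ v, nm P f (fun ω => g ω = v ∧ E ω) := by
  unfold nm
  rw [Finset.sum_comm]
  refine Finset.sum_congr rfl fun ω _ => ?_
  rw [eq_comm]
  by_cases hE : E ω <;> simp [hE, Finset.sum_ite_eq]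

lemma nm_comp {V : Type*} [Fintype V] (g : Ω → V) (φ : V → ℝ) (E : Ω → Prop) :
    nm P (fun ω => φ (g ω)) E = ∑ v, φ v * pr P (fun ω => g ω = v ∧ E ω) := by
  unfold nm pr
  simp only [Finset.mul_sum]
  rw [Finset.sum_comm]
  refine Finset.sum_congr rfl fun ω _ => ?_
  rw [eq_comm]
  by_cases hE : E ω <;> simp [hE, mul_ite, Finset.sum_ite_eq, mul_comm]

lemma nm_eq_sum_image (f : Ω → ℝ) (E : Ω → Prop) :
    nm P f E = ∑ y ∈ Finset.image f Finset.univ,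
      y * pr P (fun ω => f ω = y ∧ E ω) := by
  unfold nm pr
  simp only [Finset.mul_sum]
  rw [Finset.sum_comm]
  refine Finset.sum_congr rfl fun ω _ => ?_
  rw [eq_comm]
  by_cases hE : E ω <;> simp [hE, mul_ite, Finset.sum_ite_eq, Finset.mem_image, mul_comm]

end TwoProxyAux

open TwoProxyAux

theorem two_proxy_identity {Ω U X W Z : Type*} [Fintype Ω] [Fintype U] [Fintype X]
    [Fintype W] [Fintype Z]
    (P : Ω → ℝ) (hP : ∀ ω, 0 ≤ P ω) (hP1 : ∑ ω, P ω = 1)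
    (Uv : Ω → U) (Xv : Ω → X) (Wv : Ω → W) (Zv : Ω → Z) (Av : Ω → Bool) (Yv : Ω → ℝ)
    (a : Bool) (Ya : Ω → ℝ)
    (hY : ∀ ω, 0 ≤ Yv ω)
    -- (i) Y^(a) ⟂ A | (X,U)
    (hYaA : ∀ (y : ℝ) (a' : Bool) (x : X) (u : U),
      pr P (fun ω => Ya ω = y ∧ Av ω = a' ∧ Xv ω = x ∧ Uv ω = u) *
          pr P (fun ω => Xv ω = x ∧ Uv ω = u) =
        pr P (fun ω => Ya ω = y ∧ Xv ω = x ∧ Uv ω = u) *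
          pr P (fun ω => Av ω = a' ∧ Xv ω = x ∧ Uv ω = u))
    -- positivity
    (hpos : ∀ (a' : Bool) (x : X) (u : U),
      0 < pr P fun ω => Av ω = a' ∧ Xv ω = x ∧ Uv ω = u)
    -- consistency
    (hcons : ∀ ω, Av ω = a → Yv ω = Ya ω)
    -- (ii) outcome bridge function h
    (h : W → Bool → X → ℝ) (hh : ∀ w a' x, 0 ≤ h w a' x)
    (hbridgeh : ∀ (a' : Bool) (x : X) (u : U),
      ce P Yv (fun ω => Av ω = a' ∧ Xv ω = x ∧ Uv ω = u) =
        ce P (fun ω => h (Wv ω) a' (Xv ω)) (fun ω => Av ω = a' ∧ Xv ω = x ∧ Uv ω = u))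
    -- (iii) treatment bridge function q
    (q : Z → Bool → X → ℝ) (hq : ∀ z a' x, 0 ≤ q z a' x)
    (hbridgeq : ∀ (a' : Bool) (x : X) (u : U),
      ce P (fun ω => q (Zv ω) a' (Xv ω)) (fun ω => Av ω = a' ∧ Xv ω = x ∧ Uv ω = u) =
        cpr P (fun ω => Uv ω = u) (fun ω => Av ω = !a' ∧ Xv ω = x) /
          cpr P (fun ω => Uv ω = u) (fun ω => Av ω = a' ∧ Xv ω = x))
    -- (iv) W ⟂ Z | (A, X, U)
    (hWZ : ∀ (w : W) (z : Z) (a' : Bool) (x : X) (u : U),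
      pr P (fun ω => Wv ω = w ∧ Zv ω = z ∧ Av ω = a' ∧ Xv ω = x ∧ Uv ω = u) *
          pr P (fun ω => Av ω = a' ∧ Xv ω = x ∧ Uv ω = u) =
        pr P (fun ω => Wv ω = w ∧ Av ω = a' ∧ Xv ω = x ∧ Uv ω = u) *
          pr P (fun ω => Zv ω = z ∧ Av ω = a' ∧ Xv ω = x ∧ Uv ω = u)) :
    ce P Ya (fun ω => Av ω = !a) =
      ∑ w : W, ∑ z : Z, ∑ x : X,
        h w a x * q z a x *
          cpr P (fun ω => Wv ω = w ∧ Zv ω = z) (fun ω => Av ω = a ∧ Xv ω = x) *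
          cpr P (fun ω => Xv ω = x) (fun ω => Av ω = !a) := by
  classical
  -- the sample space is nonempty
  have hΩ : Nonempty Ω := by
    by_contra hne
    rw [not_nonempty_iff] at hne
    rw [Finset.sum_eq_zero (fun ω _ => (hne.false ω).elim)] at hP1
    exact zero_ne_one hP1
  obtain ⟨ω0⟩ := hΩ
  -- positivity facts
  have prpos_ax : ∀ (a' : Bool) (x : X), 0 < pr P (fun ω => Av ω = a' ∧ Xv ω = x) :=
    fun a' x => lt_of_lt_of_le (hpos a' x (Uv ω0))
      (pr_mono P hP (fun ω hw => ⟨hw.1, hw.2.1⟩))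
  have prpos_xu : ∀ (x : X) (u : U), 0 < pr P (fun ω => Xv ω = x ∧ Uv ω = u) :=
    fun x u => lt_of_lt_of_le (hpos a x u)
      (pr_mono P hP (fun ω hw => ⟨hw.2.1, hw.2.2⟩))
  have prpos_na : 0 < pr P (fun ω => Av ω = !a) :=
    lt_of_lt_of_le (hpos (!a) (Xv ω0) (Uv ω0)) (pr_mono P hP (fun ω hw => hw.1))
  -- key pointwise identity on (x, u)
  have key : ∀ (x : X) (u : U),
      nm P Ya (fun ω => Av ω = !a ∧ Xv ω = x ∧ Uv ω = u) =
        nm P (fun ω => h (Wv ω) a x * q (Zv ω) a x)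
            (fun ω => Av ω = a ∧ Xv ω = x ∧ Uv ω = u) *
          (pr P (fun ω => Av ω = !a ∧ Xv ω = x) /
            pr P (fun ω => Av ω = a ∧ Xv ω = x)) := by
    intro x u
    have hp1 : 0 < pr P (fun ω => Av ω = a ∧ Xv ω = x ∧ Uv ω = u) := hpos a x u
    have hp0 : 0 < pr P (fun ω => Av ω = !a ∧ Xv ω = x ∧ Uv ω = u) := hpos (!a) x u
    have hpxu : 0 < pr P (fun ω => Xv ω = x ∧ Uv ω = u) := prpos_xu x u
    have hpa1 : 0 < pr P (fun ω => Av ω = a ∧ Xv ω = x) := prpos_ax a x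
    have hpa0 : 0 < pr P (fun ω => Av ω = !a ∧ Xv ω = x) := prpos_ax (!a) x
    -- independence in expectation form
    have ind : ∀ a' : Bool,
        nm P Ya (fun ω => Av ω = a' ∧ Xv ω = x ∧ Uv ω = u) *
            pr P (fun ω => Xv ω = x ∧ Uv ω = u) =
          nm P Ya (fun ω => Xv ω = x ∧ Uv ω = u) *
            pr P (fun ω => Av ω = a' ∧ Xv ω = x ∧ Uv ω = u) := by
      intro a'
      rw [nm_eq_sum_image P Ya (fun ω => Av ω = a' ∧ Xv ω = x ∧ Uv ω = u),
        nm_eq_sum_image P Ya (fun ω => Xv ω = x ∧ Uv ω = u),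
        Finset.sum_mul, Finset.sum_mul]
      refine Finset.sum_congr rfl fun y _ => ?_
      linear_combination y * hYaA y a' x u
    have eq1 : nm P Ya (fun ω => Av ω = !a ∧ Xv ω = x ∧ Uv ω = u) *
        pr P (fun ω => Av ω = a ∧ Xv ω = x ∧ Uv ω = u) =
        nm P Ya (fun ω => Av ω = a ∧ Xv ω = x ∧ Uv ω = u) *
        pr P (fun ω => Av ω = !a ∧ Xv ω = x ∧ Uv ω = u) :=
      mul_right_cancel₀ (ne_of_gt hpxu) (by
        linear_combination pr P (fun ω => Av ω = a ∧ Xv ω = x ∧ Uv ω = u) * ind (!a) -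
          pr P (fun ω => Av ω = !a ∧ Xv ω = x ∧ Uv ω = u) * ind a)
    -- consistency and the outcome bridge
    have eq2 : nm P Ya (fun ω => Av ω = a ∧ Xv ω = x ∧ Uv ω = u) =
        nm P (fun ω => h (Wv ω) a x) (fun ω => Av ω = a ∧ Xv ω = x ∧ Uv ω = u) := by
      have hb := hbridgeh a x u
      rw [ce_eq, ce_eq, div_eq_div_iff (ne_of_gt hp1) (ne_of_gt hp1)] at hb
      have hb2 := mul_right_cancel₀ (ne_of_gt hp1) hb
      have e1 : nm P Ya (fun ω => Av ω = a ∧ Xv ω = x ∧ Uv ω = u) =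
          nm P Yv (fun ω => Av ω = a ∧ Xv ω = x ∧ Uv ω = u) :=
        nm_congr P (fun ω => Iff.rfl) (fun ω hω => (hcons ω hω.1).symm)
      have e2 : nm P (fun ω => h (Wv ω) a (Xv ω))
            (fun ω => Av ω = a ∧ Xv ω = x ∧ Uv ω = u) =
          nm P (fun ω => h (Wv ω) a x) (fun ω => Av ω = a ∧ Xv ω = x ∧ Uv ω = u) :=
        nm_congr P (fun ω => Iff.rfl) (fun ω hω => by rw [hω.2.1])
      rw [e1, hb2, e2]
    -- treatment bridge
    have eq3 : nm P (fun ω => q (Zv ω) a x) (fun ω => Av ω = a ∧ Xv ω = x ∧ Uv ω = u) *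
        pr P (fun ω => Av ω = !a ∧ Xv ω = x) =
        pr P (fun ω => Av ω = !a ∧ Xv ω = x ∧ Uv ω = u) *
        pr P (fun ω => Av ω = a ∧ Xv ω = x) := by
      have hb := hbridgeq a x u
      rw [ce_eq] at hb
      unfold cpr at hb
      have e2 : nm P (fun ω => q (Zv ω) a (Xv ω))
            (fun ω => Av ω = a ∧ Xv ω = x ∧ Uv ω = u) =
          nm P (fun ω => q (Zv ω) a x) (fun ω => Av ω = a ∧ Xv ω = x ∧ Uv ω = u) :=
        nm_congr P (fun ω => Iff.rfl) (fun ω hω => by rw [hω.2.1])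
      have e3 : pr P (fun ω => Uv ω = u ∧ Av ω = !a ∧ Xv ω = x) =
          pr P (fun ω => Av ω = !a ∧ Xv ω = x ∧ Uv ω = u) :=
        pr_congr P (fun ω => by tauto)
      have e4 : pr P (fun ω => Uv ω = u ∧ Av ω = a ∧ Xv ω = x) =
          pr P (fun ω => Av ω = a ∧ Xv ω = x ∧ Uv ω = u) :=
        pr_congr P (fun ω => by tauto)
      rw [e2, e3, e4] at hb
      rw [div_div_div_comm, div_eq_div_iff (by positivity) (by positivity)] at hb
      field_simp [ne_of_gt hp1, ne_of_gt hpa1] at hb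
      linarith
    -- conditional independence of W and Z, in expectation form
    have exp_hq : nm P (fun ω => h (Wv ω) a x * q (Zv ω) a x)
        (fun ω => Av ω = a ∧ Xv ω = x ∧ Uv ω = u) =
        ∑ w : W, ∑ z : Z, h w a x * q z a x *
          pr P (fun ω => Wv ω = w ∧ Zv ω = z ∧ Av ω = a ∧ Xv ω = x ∧ Uv ω = u) := by
      rw [nm_comp P (fun ω => (Wv ω, Zv ω)) (fun p => h p.1 a x * q p.2 a x)
        (fun ω => Av ω = a ∧ Xv ω = x ∧ Uv ω = u), Fintype.sum_prod_type]
      refine Finset.sum_congr rfl fun w _ => Finset.sum_congr rfl fun z _ => ?_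
      show h w a x * q z a x * _ = _
      congr 1
      exact pr_congr P (fun ω => by rw [Prod.mk.injEq]; tauto)
    have exp_h : nm P (fun ω => h (Wv ω) a x)
        (fun ω => Av ω = a ∧ Xv ω = x ∧ Uv ω = u) =
        ∑ w : W, h w a x *
          pr P (fun ω => Wv ω = w ∧ Av ω = a ∧ Xv ω = x ∧ Uv ω = u) :=
      nm_comp P Wv (fun w => h w a x) _
    have exp_q : nm P (fun ω => q (Zv ω) a x)
        (fun ω => Av ω = a ∧ Xv ω = x ∧ Uv ω = u) =
        ∑ z : Z, q z a x *
          pr P (fun ω => Zv ω = z ∧ Av ω = a ∧ Xv ω = x ∧ Uv ω = u) :=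
      nm_comp P Zv (fun z => q z a x) _
    have eq4 : nm P (fun ω => h (Wv ω) a x * q (Zv ω) a x)
        (fun ω => Av ω = a ∧ Xv ω = x ∧ Uv ω = u) *
        pr P (fun ω => Av ω = a ∧ Xv ω = x ∧ Uv ω = u) =
        nm P (fun ω => h (Wv ω) a x) (fun ω => Av ω = a ∧ Xv ω = x ∧ Uv ω = u) *
        nm P (fun ω => q (Zv ω) a x) (fun ω => Av ω = a ∧ Xv ω = x ∧ Uv ω = u) := by
      rw [exp_hq, exp_h, exp_q, Finset.sum_mul_sum]
      rw [Finset.sum_mul]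
      refine Finset.sum_congr rfl fun w _ => ?_
      rw [Finset.sum_mul]
      refine Finset.sum_congr rfl fun z _ => ?_
      linear_combination (h w a x * q z a x) * hWZ w z a x u
    -- combine
    have final : nm P Ya (fun ω => Av ω = !a ∧ Xv ω = x ∧ Uv ω = u) *
        pr P (fun ω => Av ω = a ∧ Xv ω = x) =
        nm P (fun ω => h (Wv ω) a x * q (Zv ω) a x)
          (fun ω => Av ω = a ∧ Xv ω = x ∧ Uv ω = u) *
        pr P (fun ω => Av ω = !a ∧ Xv ω = x) :=
      mul_right_cancel₀ (ne_of_gt hp1) (by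
        linear_combination pr P (fun ω => Av ω = a ∧ Xv ω = x) * eq1 +
          pr P (fun ω => Av ω = !a ∧ Xv ω = x ∧ Uv ω = u) *
            pr P (fun ω => Av ω = a ∧ Xv ω = x) * eq2 -
          nm P (fun ω => h (Wv ω) a x)
            (fun ω => Av ω = a ∧ Xv ω = x ∧ Uv ω = u) * eq3 -
          pr P (fun ω => Av ω = !a ∧ Xv ω = x) * eq4)
    rw [← mul_div_assoc, eq_div_iff (ne_of_gt hpa1)]
    exact final
  -- assembly
  rw [ce_eq P Ya, div_eq_iff (ne_of_gt prpos_na)]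
  have decomp : nm P Ya (fun ω => Av ω = !a) =
      ∑ x : X, ∑ u : U, nm P Ya (fun ω => Av ω = !a ∧ Xv ω = x ∧ Uv ω = u) := by
    rw [nm_partition P (fun ω => (Xv ω, Uv ω)) Ya (fun ω => Av ω = !a),
      Fintype.sum_prod_type]
    exact Finset.sum_congr rfl fun x _ => Finset.sum_congr rfl fun u _ =>
      nm_congr P (fun ω => by rw [Prod.mk.injEq]; tauto) (fun _ _ => rfl)
  have sum_u : ∀ x : X,
      (∑ u : U, nm P (fun ω => h (Wv ω) a x * q (Zv ω) a x)
        (fun ω => Av ω = a ∧ Xv ω = x ∧ Uv ω = u)) =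
      nm P (fun ω => h (Wv ω) a x * q (Zv ω) a x) (fun ω => Av ω = a ∧ Xv ω = x) := by
    intro x
    rw [nm_partition P Uv (fun ω => h (Wv ω) a x * q (Zv ω) a x)
      (fun ω => Av ω = a ∧ Xv ω = x)]
    exact Finset.sum_congr rfl fun u _ =>
      nm_congr P (fun ω => by tauto) (fun _ _ => rfl)
  have exp_x : ∀ x : X, nm P (fun ω => h (Wv ω) a x * q (Zv ω) a x)
      (fun ω => Av ω = a ∧ Xv ω = x) =
      ∑ w : W, ∑ z : Z, h w a x * q z a x *
        pr P (fun ω => (Wv ω = w ∧ Zv ω = z) ∧ Av ω = a ∧ Xv ω = x) := by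
    intro x
    rw [nm_comp P (fun ω => (Wv ω, Zv ω)) (fun p => h p.1 a x * q p.2 a x)
      (fun ω => Av ω = a ∧ Xv ω = x), Fintype.sum_prod_type]
    refine Finset.sum_congr rfl fun w _ => Finset.sum_congr rfl fun z _ => ?_
    exact congrArg (fun t => h w a x * q z a x * t)
      (pr_congr P (fun ω => by rw [Prod.mk.injEq]))
  have swap : ∀ (F : W → Z → X → ℝ),
      (∑ w : W, ∑ z : Z, ∑ x : X, F w z x) = ∑ x : X, ∑ w : W, ∑ z : Z, F w z x := by
    intro F
    rw [show (∑ w : W, ∑ z : Z, ∑ x : X, F w z x) = ∑ w : W, ∑ x : X, ∑ z : Z, F w z x from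
      Finset.sum_congr rfl fun w _ => Finset.sum_comm]
    exact Finset.sum_comm
  have lhs_eq : (∑ x : X, ∑ u : U,
      nm P Ya (fun ω => Av ω = !a ∧ Xv ω = x ∧ Uv ω = u)) =
      ∑ x : X, (∑ w : W, ∑ z : Z, h w a x * q z a x *
          pr P (fun ω => (Wv ω = w ∧ Zv ω = z) ∧ Av ω = a ∧ Xv ω = x)) *
        (pr P (fun ω => Av ω = !a ∧ Xv ω = x) / pr P (fun ω => Av ω = a ∧ Xv ω = x)) := by
    refine Finset.sum_congr rfl fun x _ => ?_
    calc (∑ u : U, nm P Ya (fun ω => Av ω = !a ∧ Xv ω = x ∧ Uv ω = u))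
        = ∑ u : U, nm P (fun ω => h (Wv ω) a x * q (Zv ω) a x)
              (fun ω => Av ω = a ∧ Xv ω = x ∧ Uv ω = u) *
            (pr P (fun ω => Av ω = !a ∧ Xv ω = x) /
              pr P (fun ω => Av ω = a ∧ Xv ω = x)) :=
          Finset.sum_congr rfl fun u _ => key x u
      _ = (∑ u : U, nm P (fun ω => h (Wv ω) a x * q (Zv ω) a x)
              (fun ω => Av ω = a ∧ Xv ω = x ∧ Uv ω = u)) *
            (pr P (fun ω => Av ω = !a ∧ Xv ω = x) /
              pr P (fun ω => Av ω = a ∧ Xv ω = x)) := (Finset.sum_mul _ _ _).symm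
      _ = _ := by rw [sum_u x, exp_x x]
  rw [decomp, lhs_eq]
  simp only [cpr]
  simp only [Finset.sum_mul]
  rw [swap (fun w z x => h w a x * q z a x *
    (pr P (fun ω => (Wv ω = w ∧ Zv ω = z) ∧ Av ω = a ∧ Xv ω = x) /
      pr P (fun ω => Av ω = a ∧ Xv ω = x)) *
    (pr P (fun ω => Xv ω = x ∧ Av ω = !a) / pr P (fun ω => Av ω = !a)) *
    pr P (fun ω => Av ω = !a))]
  refine Finset.sum_congr rfl fun x _ => Finset.sum_congr rfl fun w _ =>
    Finset.sum_congr rfl fun z _ => ?_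
  have e : pr P (fun ω => Xv ω = x ∧ Av ω = !a) =
      pr P (fun ω => Av ω = !a ∧ Xv ω = x) := pr_congr P fun ω => and_comm
  rw [e]
  field_simp
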